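/- Let M be a completely positive n×n matrix orthogonal to a copositive n×n matrix A, and let M = Σ_{j=1}^p x_j x_jᵀ be a cp decomposition with nonnegative vectors x_j. If some index i lies in the support of every x_j (1 ≤ j ≤ p), then the i-th column of A is in the nullspace of M, i.e., M A e_i = 0. -/

import Mathlib

open Matrix BigOperators

def Copositive {ι : Type} [Fintype ι] (A : Matrix ι ι ℝ) : Prop :=
  A.IsSymm ∧ ∀ x : ι → ℝ, (∀ i, 0 ≤ x i) → 0 ≤ x ⬝ᵥ A.mulVec x

def CompletelyPositive {ι : Type} [Fintype ι] (M : Matrix ι ι ℝ) : Prop :=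
  ∃ (p : ℕ) (v : Fin p → ι → ℝ), (∀ j i, 0 ≤ v j i) ∧
    M = ∑ j, Matrix.vecMulVec (v j) (v j)

noncomputable def cpRank {ι : Type} [Fintype ι] (M : Matrix ι ι ℝ) : ℕ :=
  sInf {p : ℕ | ∃ v : Fin p → ι → ℝ, (∀ j i, 0 ≤ v j i) ∧
    M = ∑ j, Matrix.vecMulVec (v j) (v j)}

noncomputable def pmax (n : ℕ) : ℕ :=
  sSup {k : ℕ | ∃ M : Matrix (Fin n) (Fin n) ℝ, CompletelyPositive M ∧ cpRank M = k}

def ExtremeCopositive {ι : Type} [Fintype ι] (A : Matrix ι ι ℝ) : Prop :=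
  Copositive A ∧ A ≠ 0 ∧ ∀ B C : Matrix ι ι ℝ, Copositive B → Copositive C → A = B + C →
    ∃ s t : ℝ, 0 ≤ s ∧ 0 ≤ t ∧ B = s • A ∧ C = t • A

def E12 (k : ℕ) : Matrix (Fin k) (Fin k) ℝ :=
  Matrix.of fun i j => if (i.val = 0 ∧ j.val = 1) ∨ (i.val = 1 ∧ j.val = 0) then 1 else 0

def InOrbitOfE12 {k : ℕ} (S : Matrix (Fin k) (Fin k) ℝ) : Prop :=
  ∃ (d : Fin k → ℝ) (σ : Equiv.Perm (Fin k)), (∀ i, 0 < d i) ∧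
    S = Matrix.diagonal d * (σ.permMatrix ℝ)ᵀ * E12 k * σ.permMatrix ℝ * Matrix.diagonal d

lemma quad_min {n : ℕ} (A : Matrix (Fin n) (Fin n) ℝ) (hA : Copositive A)
    (s : Fin n → ℝ) (hs : ∀ k, 0 ≤ s k) (hq : s ⬝ᵥ A.mulVec s = 0)
    (i : Fin n) (hsi : 0 < s i) : (A.mulVec s) i = 0 := by
  obtain ⟨hsym, hcop⟩ := hA
  set c : ℝ := (A.mulVec s) i with hc
  set e : Fin n → ℝ := Pi.single i 1 with he
  have hcross : s ⬝ᵥ A.mulVec e = c := by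
    rw [he]
    rw [Matrix.mulVec_single]
    have : s ⬝ᵥ (fun k => A k i * 1) = Aᵀ.mulVec s i := by
      simp [Matrix.mulVec, dotProduct, Matrix.transpose_apply, mul_comm]
    have h' : (MulOpposite.op (1:ℝ) • A.col i) = (fun k => A k i * 1) := by
      ext k; simp
    rw [h', this, hsym]
  have hkey : ∀ t : ℝ, -s i ≤ t → 0 ≤ s ⬝ᵥ A.mulVec s + 2 * t * c + t ^ 2 * A i i := by
    intro t ht
    have hnn : ∀ k, 0 ≤ (s + t • e) k := by
      intro k
      by_cases hk : k = i
      · subst hk; simp [he]; linarith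
      · simp [he, Pi.single_apply, hk, hs k]
    have := hcop _ hnn
    have hexp : (s + t • e) ⬝ᵥ A.mulVec (s + t • e)
        = s ⬝ᵥ A.mulVec s + 2 * t * c + t ^ 2 * A i i := by
      rw [Matrix.mulVec_add, add_dotProduct, dotProduct_add,
        dotProduct_add]
      have h1 : A.mulVec (t • e) = t • A.mulVec (e) := by
        rw [Matrix.mulVec_smul]
      have h2 : (t • e : Fin n → ℝ) ⬝ᵥ A.mulVec s = t * c := by
        rw [smul_dotProduct, he, single_dotProduct]; simp [hc]
      have h3 : s ⬝ᵥ A.mulVec (t • e) = t * c := by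
        rw [h1, dotProduct_smul, hcross]; simp
      have h4 : (t • e : Fin n → ℝ) ⬝ᵥ A.mulVec (t • e) = t ^ 2 * A i i := by
        rw [h1, smul_dotProduct, dotProduct_smul, he,
          Matrix.mulVec_single]
        simp [single_dotProduct]
        ring
      rw [h2, h3, h4]; ring
    rw [hexp] at this; exact this
  by_contra hc0
  have habs : 0 < |c| := abs_pos.mpr hc0
  set ε : ℝ := min (s i / (|c| + 1)) (|c| / (|A i i| + 1)) with hε
  have hε0 : 0 < ε := lt_min (by positivity) (by positivity)
  set t : ℝ := -(c * ε / |c|) with htdef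
  have habs_t : |t| = ε := by
    rw [htdef, abs_neg, abs_div, abs_mul, abs_abs, abs_of_pos hε0]
    field_simp
  have ht1 : -s i ≤ t := by
    have h1 : |t| ≤ s i := by
      rw [habs_t]
      calc ε ≤ s i / (|c| + 1) := min_le_left _ _
        _ ≤ s i := by
          rw [div_le_iff₀ (by positivity)]
          nlinarith [abs_nonneg c, hsi]
    have := neg_abs_le t
    linarith
  have h := hkey t ht1
  rw [hq] at h
  have htc : t * c = -(ε * |c|) := by
    have hcc : c * c = |c| * |c| := (abs_mul_abs_self c).symm
    rw [htdef]
    field_simp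
    nlinarith [hcc]
  have hAii : t ^ 2 * A i i ≤ ε * |c| := by
    have h2 : t ^ 2 = ε ^ 2 := by rw [← sq_abs, habs_t]
    have h1 : t ^ 2 * A i i ≤ ε ^ 2 * |A i i| := by
      rw [h2]; exact mul_le_mul_of_nonneg_left (le_abs_self _) (sq_nonneg ε)
    have h3 : ε ≤ |c| / (|A i i| + 1) := min_le_right _ _
    have h3' : ε * (|A i i| + 1) ≤ |c| := by
      rw [← le_div_iff₀ (by positivity : (0:ℝ) < |A i i| + 1)]; exact h3
    nlinarith [hε0.le, abs_nonneg (A i i), mul_le_mul_of_nonneg_left h3' hε0.le]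
  nlinarith [mul_pos hε0 habs]

theorem stmt1 {n p : ℕ} (M A : Matrix (Fin n) (Fin n) ℝ) (x : Fin p → Fin n → ℝ)
    (hx : ∀ j i, 0 ≤ x j i) (hM : M = ∑ j, Matrix.vecMulVec (x j) (x j))
    (hA : Copositive A) (horth : Matrix.trace (Mᵀ * A) = 0)
    (i : Fin n) (hi : ∀ j, 0 < x j i) :
    M.mulVec (fun k => A k i) = 0 := by
  have key : ∀ u : Fin n → ℝ, Matrix.trace ((Matrix.vecMulVec u u)ᵀ * A) = u ⬝ᵥ A.mulVec u := by
    intro u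
    simp only [Matrix.trace, Matrix.diag_apply, Matrix.mul_apply, Matrix.transpose_apply,
      Matrix.vecMulVec_apply, dotProduct, Matrix.mulVec, Finset.mul_sum]
    rw [Finset.sum_comm]
    exact Finset.sum_congr rfl fun l _ => Finset.sum_congr rfl fun k _ => by ring
  have htr : ∑ j, x j ⬝ᵥ A.mulVec (x j) = 0 := by
    rw [← horth, hM, Matrix.transpose_sum, Finset.sum_mul, Matrix.trace_sum]
    exact Finset.sum_congr rfl fun j _ => (key (x j)).symm
  have hterm : ∀ j, x j ⬝ᵥ A.mulVec (x j) = 0 := by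
    intro j
    have := (Finset.sum_eq_zero_iff_of_nonneg
      (fun j _ => hA.2 (x j) (hx j))).mp htr
    exact this j (Finset.mem_univ j)
  have hzero : ∀ j, (A.mulVec (x j)) i = 0 := fun j =>
    quad_min A hA (x j) (hx j) (hterm j) i (hi j)
  have hcol : ∀ j, ∑ l, x j l * A l i = 0 := by
    intro j
    calc ∑ l, x j l * A l i = (Aᵀ.mulVec (x j)) i := by
          simp [Matrix.mulVec, dotProduct, Matrix.transpose_apply, mul_comm]
      _ = (A.mulVec (x j)) i := by rw [hA.1]
      _ = 0 := hzero j
  have hfin : M.mulVec (fun k => A k i) = fun k => ∑ j, x j k * ∑ l, x j l * A l i := by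
    funext k
    rw [hM]
    simp only [Matrix.mulVec, dotProduct, Matrix.sum_apply, Matrix.vecMulVec_apply,
      Finset.sum_mul, Finset.mul_sum]
    rw [Finset.sum_comm]
    exact Finset.sum_congr rfl fun j _ => Finset.sum_congr rfl fun l _ => by ring
  rw [hfin]
  funext k
  simp [hcol]
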